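/- Let A be a Noetherian ℤ-graded commutative ring and M a finitely generated graded A-module. Then the following are equivalent: (a) M satisfies the descending chain condition on graded submodules; (b) M has finite *length (i.e., a *composition series exists); (c) the set of graded prime ideals containing Ann_A(M) consists of finitely many ideals, each of which is maximal among proper graded ideals of A. -/

import Mathlib

open DirectSum

section
variable {A M : Type*} [CommRing A] [AddCommGroup M] [Module A M]

/-- A submodule of a graded module is graded if it is stable under taking homogeneous
components. -/
def IsGradedSubmodule (ℳ : ℤ → AddSubgroup M) [DirectSum.Decomposition ℳ]
    (N : Submodule A M) : Prop :=
  ∀ (i : ℤ) (m : M), m ∈ N → (DirectSum.decompose ℳ m i : M) ∈ N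

/-- A *composition series of length `n` for a graded module. -/
def IsStarCompositionSeries (ℳ : ℤ → AddSubgroup M) [DirectSum.Decomposition ℳ]
    {n : ℕ} (c : Fin (n + 1) → Submodule A M) : Prop :=
  StrictMono c ∧ c 0 = ⊥ ∧ c (Fin.last n) = ⊤ ∧ (∀ i, IsGradedSubmodule ℳ (c i)) ∧
    ∀ i : Fin n, ∀ N : Submodule A M, IsGradedSubmodule ℳ N →
      c i.castSucc ≤ N → N ≤ c i.succ → N = c i.castSucc ∨ N = c i.succ

/-- A proper graded ideal that is maximal among proper graded ideals. -/
def IsStarMaximal {A : Type*} [CommRing A] (𝒜 : ℤ → AddSubgroup A) [GradedRing 𝒜]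
    (I : Ideal A) : Prop :=
  Ideal.IsHomogeneous 𝒜 I ∧ I ≠ ⊤ ∧
    ∀ J : Ideal A, Ideal.IsHomogeneous 𝒜 J → I ≤ J → J = I ∨ J = ⊤

section Aux
variable (𝒜 : ℤ → AddSubgroup A) [GradedRing 𝒜]
variable (ℳ : ℤ → AddSubgroup M) [DirectSum.Decomposition ℳ] [SetLike.GradedSMul 𝒜 ℳ]

theorem aux_decompose_smul {m : M} {j : ℤ} (hm : m ∈ ℳ j) (a : A) (i : ℤ) :
    (decompose ℳ (a • m) (i + j) : M) = (decompose 𝒜 a i : A) • m := by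
  induction a using DirectSum.Decomposition.inductionOn 𝒜 with
  | zero => simp
  | @homogeneous k a' =>
      have hmem : (a' : A) • m ∈ ℳ (k + j) := SetLike.GradedSMul.smul_mem a'.2 hm
      by_cases hik : i = k
      · subst hik
        rw [decompose_of_mem_same ℳ hmem, decompose_of_mem_same 𝒜 a'.2]
      · have h1 : (decompose ℳ ((a' : A) • m) (i + j) : M) = 0 :=
          decompose_of_mem_ne ℳ hmem (show k + j ≠ i + j by omega)
        have h2 : (decompose 𝒜 (a' : A) i : A) = 0 :=
          decompose_of_mem_ne 𝒜 a'.2 (Ne.symm hik)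
        rw [h1, h2, zero_smul]
  | add b c hb hc =>
      have hb' := hb; have hc' := hc
      rw [add_smul]
      rw [show decompose ℳ (b • m + c • m) (i+j) = decompose ℳ (b • m) (i+j) + decompose ℳ (c • m) (i+j) by rw [decompose_add]; rfl]
      push_cast
      rw [hb', hc', decompose_add]
      simp [DirectSum.add_apply, add_smul]

theorem aux_decompose_smul' {m : M} {j : ℤ} (hm : m ∈ ℳ j) (a : A) (k : ℤ) :
    (decompose ℳ (a • m) k : M) = (decompose 𝒜 a (k - j) : A) • m := by
  have := aux_decompose_smul 𝒜 ℳ hm a (k - j)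
  rwa [sub_add_cancel] at this

variable {ℳ}


theorem gs_bot : IsGradedSubmodule ℳ (⊥ : Submodule A M) := by
  intro i m hm
  rw [Submodule.mem_bot] at hm
  subst hm; simp

theorem gs_top : IsGradedSubmodule ℳ (⊤ : Submodule A M) := fun _ _ _ => trivial

theorem gs_inf {N P : Submodule A M} (hN : IsGradedSubmodule ℳ N) (hP : IsGradedSubmodule ℳ P) :
    IsGradedSubmodule ℳ (N ⊓ P) := fun i m hm => ⟨hN i m hm.1, hP i m hm.2⟩

theorem gs_sup {N P : Submodule A M} (hN : IsGradedSubmodule ℳ N) (hP : IsGradedSubmodule ℳ P) :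
    IsGradedSubmodule ℳ (N ⊔ P) := by
  intro i m hm
  obtain ⟨x, hx, y, hy, rfl⟩ := Submodule.mem_sup.mp hm
  rw [decompose_add]
  exact Submodule.add_mem _ (Submodule.mem_sup_left (hN i x hx))
    (Submodule.mem_sup_right (hP i y hy))

/-- an element not in a graded submodule has a homogeneous component not in it -/
theorem gs_exists_component {N : Submodule A M} (hN : IsGradedSubmodule ℳ N) {x : M}
    (hx : x ∉ N) : ∃ i, (decompose ℳ x i : M) ∉ N := by
  by_contra h
  push_neg at h
  apply hx
  classical
  rw [← DirectSum.sum_support_decompose ℳ x]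
  exact Submodule.sum_mem _ fun i _ => h i

/-- a graded submodule strictly between two others contains a homogeneous element witness -/
theorem gs_exists_homog_mem_not_mem {N K : Submodule A M} (hN : IsGradedSubmodule ℳ N)
    (hK : IsGradedSubmodule ℳ K) (h : ¬ K ≤ N) :
    ∃ (q : M) (j : ℤ), q ∈ ℳ j ∧ q ∈ K ∧ q ∉ N := by
  obtain ⟨x, hxK, hxN⟩ := Set.not_subset.mp h
  obtain ⟨i, hi⟩ := gs_exists_component hN hxN
  exact ⟨_, i, SetLike.coe_mem _, hK i x hxK, hi⟩

/-- the ideal of elements carrying `m` into `N` -/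
def annIn (N : Submodule A M) (m : M) : Ideal A :=
  N.comap (LinearMap.toSpanSingleton A M m)

theorem mem_annIn {N : Submodule A M} {m : M} {a : A} : a ∈ annIn N m ↔ a • m ∈ N := Iff.rfl

theorem annIn_homogeneous {N : Submodule A M} (hN : IsGradedSubmodule ℳ N) {m : M} {j : ℤ}
    (hm : m ∈ ℳ j) : Ideal.IsHomogeneous 𝒜 (annIn N m) := by
  intro i a ha
  rw [mem_annIn] at ha ⊢
  rw [← aux_decompose_smul 𝒜 ℳ hm a i]
  exact hN _ _ ha

theorem colon_homogeneous {N Q : Submodule A M} (hN : IsGradedSubmodule ℳ N)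
    (hQ : IsGradedSubmodule ℳ Q) : Ideal.IsHomogeneous 𝒜 (N.colon Q) := by
  intro i a ha
  rw [Submodule.mem_colon] at ha ⊢
  intro q hq
  classical
  have : q = ∑ j ∈ (decompose ℳ q).support, (decompose ℳ q j : M) :=
    (DirectSum.sum_support_decompose ℳ q).symm
  rw [this, Finset.smul_sum]
  refine Submodule.sum_mem _ fun j _ => ?_
  rw [← aux_decompose_smul 𝒜 ℳ (SetLike.coe_mem _) a i]
  exact hN _ _ (ha _ (hQ j q hq))

/-- span of a homogeneous element is graded, and more generally N ⊔ span{m} -/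
theorem gs_sup_span (𝒜 : ℤ → AddSubgroup A) [GradedRing 𝒜] [SetLike.GradedSMul 𝒜 ℳ]
    {N : Submodule A M} (hN : IsGradedSubmodule ℳ N) {m : M} {j : ℤ}
    (hm : m ∈ ℳ j) : IsGradedSubmodule ℳ (N ⊔ Submodule.span A {m}) := by
  intro i x hx
  obtain ⟨p, hp, y, hy, rfl⟩ := Submodule.mem_sup.mp hx
  obtain ⟨r, rfl⟩ := Submodule.mem_span_singleton.mp hy
  rw [decompose_add]
  push_cast
  refine Submodule.add_mem _ (Submodule.mem_sup_left (hN i p hp)) (Submodule.mem_sup_right ?_)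
  rw [aux_decompose_smul' 𝒜 ℳ hm r i]
  exact Submodule.smul_mem _ _ (Submodule.mem_span_singleton_self m)


section core
variable {P Q : Submodule A M} (hP : IsGradedSubmodule ℳ P) (hQ : IsGradedSubmodule ℳ Q)
  (hPQ : P < Q)
  (hcov : ∀ K : Submodule A M, IsGradedSubmodule ℳ K → P ≤ K → K ≤ Q → K = P ∨ K = Q)

include 𝒜 hP hQ hPQ hcov

theorem colon_eq_annIn {q : M} {j : ℤ} (hqj : q ∈ ℳ j) (hqQ : q ∈ Q) (hqP : q ∉ P) :
    P.colon Q = annIn P q := by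
  apply le_antisymm
  · intro a ha
    exact Submodule.mem_colon.mp ha q hqQ
  · intro a ha
    rw [mem_annIn] at ha
    have hK : IsGradedSubmodule ℳ (P ⊔ Submodule.span A {q}) := gs_sup_span 𝒜 hP hqj
    have hKQ : P ⊔ Submodule.span A {q} ≤ Q :=
      sup_le hPQ.le ((Submodule.span_singleton_le_iff_mem _ _).mpr hqQ)
    have hq_mem : q ∈ P ⊔ Submodule.span A {q} :=
      Submodule.mem_sup_right (Submodule.mem_span_singleton_self q)
    rcases hcov _ hK le_sup_left hKQ with h | h
    · exact absurd (h ▸ hq_mem) hqP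
    · rw [Submodule.mem_colon]
      intro p hp
      rw [← h] at hp
      obtain ⟨p', hp', y, hy, rfl⟩ := Submodule.mem_sup.mp hp
      obtain ⟨r, rfl⟩ := Submodule.mem_span_singleton.mp hy
      rw [smul_add, smul_comm a r q]
      exact Submodule.add_mem _ (Submodule.smul_mem _ _ hp') (Submodule.smul_mem _ _ ha)

theorem colon_isPrime : (P.colon Q).IsPrime := by
  obtain ⟨q, j, hqj, hqQ, hqP⟩ :=
    gs_exists_homog_mem_not_mem hP hQ (fun h => hPQ.ne (le_antisymm hPQ.le h))
  have hchar := colon_eq_annIn 𝒜 hP hQ hPQ hcov hqj hqQ hqP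
  refine Ideal.IsHomogeneous.isPrime_of_homogeneous_mem_or_mem
    (colon_homogeneous 𝒜 hP hQ) ?_ ?_
  · intro htop
    have h1 : (1 : A) ∈ P.colon Q := htop ▸ Submodule.mem_top
    exact hqP (by simpa using Submodule.mem_colon.mp h1 q hqQ)
  · rintro x y ⟨e, hx⟩ ⟨e', hy⟩ hxy
    by_cases hyI : y ∈ P.colon Q
    · exact Or.inr hyI
    · left
      have hyq : y • q ∉ P := by
        rw [hchar, mem_annIn] at hyI; exact hyI
      have hyqQ : y • q ∈ Q := Submodule.smul_mem _ _ hqQ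
      have hyqj : y • q ∈ ℳ (e' + j) := SetLike.GradedSMul.smul_mem hy hqj
      rw [colon_eq_annIn 𝒜 hP hQ hPQ hcov hyqj hyqQ hyq, mem_annIn, smul_smul]
      rw [hchar, mem_annIn] at hxy
      exact hxy
      
set_option maxHeartbeats 1000000 in
theorem colon_isStarMaximal : IsStarMaximal 𝒜 (P.colon Q) := by
  obtain ⟨q, j, hqj, hqQ, hqP⟩ :=
    gs_exists_homog_mem_not_mem hP hQ (fun h => hPQ.ne (le_antisymm hPQ.le h))
  have hchar := colon_eq_annIn 𝒜 hP hQ hPQ hcov hqj hqQ hqP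
  refine ⟨colon_homogeneous 𝒜 hP hQ, ?_, ?_⟩
  · intro htop
    have h1 : (1 : A) ∈ P.colon Q := htop ▸ Submodule.mem_top
    exact hqP (by simpa using Submodule.mem_colon.mp h1 q hqQ)
  · intro J hJ hIJ
    by_cases hJI : J = P.colon Q
    · exact Or.inl hJI
    · right
      have hnle : ¬ J ≤ P.colon Q := fun h => hJI (le_antisymm h hIJ)
      obtain ⟨b, hbJ, hbI⟩ := Set.not_subset.mp hnle
      -- extract a homogeneous component of b in J but not in I
      have : ∃ k, (decompose 𝒜 b k : A) ∉ P.colon Q := by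
        by_contra h
        push_neg at h
        exact hbI (((colon_homogeneous 𝒜 hP hQ).mem_iff (𝒜 := 𝒜)).mpr h)
      obtain ⟨k, hbk⟩ := this
      set b' : A := (decompose 𝒜 b k : A) with hb'
      have hb'k : b' ∈ 𝒜 k := (decompose 𝒜 b k).2
      have hb'J : b' ∈ J := hJ k hbJ
      have hb'q : b' • q ∉ P := by rw [hchar, mem_annIn] at hbk; exact hbk
      have hb'qQ : b' • q ∈ Q := Submodule.smul_mem _ _ hqQ
      have hb'qj : b' • q ∈ ℳ (k + j) := SetLike.GradedSMul.smul_mem hb'k hqj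
      have hK : IsGradedSubmodule ℳ (P ⊔ Submodule.span A {b' • q}) := gs_sup_span 𝒜 hP hb'qj
      have hKQ : P ⊔ Submodule.span A {b' • q} ≤ Q :=
        sup_le hPQ.le ((Submodule.span_singleton_le_iff_mem _ _).mpr hb'qQ)
      have hKeq : P ⊔ Submodule.span A {b' • q} = Q := by
        rcases hcov _ hK le_sup_left hKQ with h | h
        · exact absurd (h ▸ Submodule.mem_sup_right (Submodule.mem_span_singleton_self _)) hb'q
        · exact h
      -- q ∈ K, take degree-j components
      have hqK : q ∈ P ⊔ Submodule.span A {b' • q} := hKeq ▸ hqQ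
      obtain ⟨p, hp, y, hy, hsum⟩ := Submodule.mem_sup.mp hqK
      obtain ⟨r, rfl⟩ := Submodule.mem_span_singleton.mp hy
      -- component of degree j
      have hcomp : (decompose ℳ p j : M) + (decompose 𝒜 r (j - (k + j)) : A) • (b' • q) = q := by
        have hd : (decompose ℳ (p + r • (b' • q)) j : M) = q := by
          rw [hsum, decompose_of_mem_same ℳ hqj]
        rw [decompose_add, DirectSum.add_apply, AddSubgroup.coe_add,
          aux_decompose_smul' 𝒜 ℳ hb'qj r j] at hd
        exact hd
      set s : A := (decompose 𝒜 r (j - (k + j)) : A) with hs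
      have hP' : (1 - s * b') • q ∈ P := by
        have h3 : (decompose ℳ p j : M) = q - s • (b' • q) := eq_sub_of_add_eq hcomp
        have heq : (1 - s * b') • q = (decompose ℳ p j : M) := by
          rw [sub_smul, one_smul, mul_smul, h3]
        rw [heq]
        exact hP j p hp
      have h1J : (1 : A) ∈ J := by
        have h1 : 1 - s * b' ∈ J := hIJ (by rw [hchar, mem_annIn]; exact hP')
        have h2 : s * b' ∈ J := J.mul_mem_left s hb'J
        simpa using J.add_mem h1 h2
      exact (Ideal.eq_top_iff_one J).mpr h1J

end core

variable (ℳ) in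
def IsRelSeries (N T : Submodule A M) {n : ℕ} (c : Fin (n + 1) → Submodule A M) : Prop :=
  StrictMono c ∧ c 0 = N ∧ c (Fin.last n) = T ∧ (∀ i, IsGradedSubmodule ℳ (c i)) ∧
    ∀ i : Fin n, ∀ K : Submodule A M, IsGradedSubmodule ℳ K →
      c i.castSucc ≤ K → K ≤ c i.succ → K = c i.castSucc ∨ K = c i.succ

/-- Build a series from any graded submodule up to ⊤, given covers exist. -/
theorem exists_relSeries_to_top [IsNoetherian A M]
    (hcov : ∀ N : Submodule A M, IsGradedSubmodule ℳ N → N ≠ ⊤ →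
      ∃ N', IsGradedSubmodule ℳ N' ∧ N < N' ∧
        ∀ K : Submodule A M, IsGradedSubmodule ℳ K → N ≤ K → K ≤ N' → K = N ∨ K = N') :
    ∀ N : Submodule A M, IsGradedSubmodule ℳ N →
      ∃ (n : ℕ) (c : Fin (n + 1) → Submodule A M), IsRelSeries ℳ N ⊤ c := by
  have wf : WellFounded ((· > ·) : Submodule A M → Submodule A M → Prop) :=
    (isNoetherian_iff (R := A) (M := M)).mp inferInstance
  intro N
  refine wf.induction
    (C := fun N => IsGradedSubmodule ℳ N →
      ∃ (n : ℕ) (c : Fin (n + 1) → Submodule A M), IsRelSeries ℳ N ⊤ c) N ?_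
  intro N IH hN
  by_cases hT : N = ⊤
  · subst hT
    exact ⟨0, fun _ => ⊤, fun i j h => absurd (Fin.lt_iff_val_lt_val.mp h) (by omega),
      rfl, rfl, fun _ => gs_top, fun i => i.elim0⟩
  · obtain ⟨N', hN', hlt, hcovN⟩ := hcov N hN hT
    obtain ⟨n, c, hsm, h0, hlast, hg, hcv⟩ := IH N' hlt hN'
    refine ⟨n + 1, Fin.cons N c, ?_, ?_, ?_, ?_, ?_⟩
    · rw [Fin.strictMono_iff_lt_succ]
      intro i
      refine Fin.cases ?_ (fun j => ?_) i
      · simpa [Fin.castSucc_zero, Fin.cons_zero, Fin.cons_succ, h0] using hlt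
      · rw [← Fin.succ_castSucc, Fin.cons_succ, Fin.cons_succ]
        exact hsm (Fin.castSucc_lt_succ (i := j))
    · exact Fin.cons_zero _ _
    · rw [← Fin.succ_last, Fin.cons_succ]; exact hlast
    · intro i
      refine Fin.cases ?_ (fun j => ?_) i
      · simpa [Fin.cons_zero] using hN
      · rw [Fin.cons_succ]; exact hg j
    · intro i
      refine Fin.cases ?_ (fun j => ?_) i
      · simp only [Fin.castSucc_zero, Fin.cons_zero, Fin.cons_succ]
        intro K hK h1 h2
        rcases hcovN K hK h1 (le_of_le_of_eq h2 h0) with h | h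
        · exact Or.inl h
        · exact Or.inr (h.trans h0.symm)
      · rw [← Fin.succ_castSucc, Fin.cons_succ, Fin.cons_succ]
        exact hcv j
/-- A series of length n from ⊥ to T forces DCC (on graded submodules below T). -/
theorem dcc_of_relSeries :
    ∀ (n : ℕ) (T : Submodule A M) (c : Fin (n + 1) → Submodule A M), IsRelSeries ℳ ⊥ T c →
      ∀ f : ℕ → Submodule A M, (∀ k, IsGradedSubmodule ℳ (f k)) → (∀ k, f (k + 1) ≤ f k) →
        (∀ k, f k ≤ T) → ∃ N, ∀ k, N ≤ k → f k = f N := by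
  intro n
  induction n with
  | zero =>
      intro T c hc f _ _ hle
      have hT : T = ⊥ := by rw [← hc.2.2.1, show (Fin.last 0) = 0 from rfl, hc.2.1]
      subst hT
      refine ⟨0, fun k _ => ?_⟩
      rw [le_bot_iff.mp (hle k), le_bot_iff.mp (hle 0)]
  | succ n IH =>
      intro T c hc f hgr hdesc hle
      obtain ⟨hsm, h0, hlast, hg, hcv⟩ := hc
      have hf_le : ∀ j k : ℕ, j ≤ k → f k ≤ f j := fun j k h =>
        antitone_nat_of_succ_le hdesc h
      set P := c (Fin.last n).castSucc with hPdef
      have hc' : IsRelSeries ℳ ⊥ P (fun i : Fin (n + 1) => c i.castSucc) := by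
        refine ⟨hsm.comp Fin.strictMono_castSucc, ?_, rfl, fun i => hg _, ?_⟩
        · show c (Fin.castSucc 0) = ⊥
          rw [Fin.castSucc_zero, h0]
        · intro i K hK h1 h2
          have h2' : K ≤ c (i.castSucc).succ := by
            rwa [Fin.succ_castSucc]
          rcases hcv i.castSucc K hK h1 h2' with h | h
          · exact Or.inl h
          · rw [Fin.succ_castSucc] at h
            exact Or.inr h
      have hsupcase : ∀ k, f k ⊔ P = P ∨ f k ⊔ P = T := by
        intro k
        have hPle : P ≤ T := by
          rw [← hlast]
          exact hsm.monotone (Fin.le_last _)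
        have h2 : f k ⊔ P ≤ c (Fin.last n).succ := by
          rw [Fin.succ_last, hlast]
          exact sup_le (hle k) hPle
        rcases hcv (Fin.last n) (f k ⊔ P) (gs_sup (hgr k) (hg _)) le_sup_right h2 with h | h
        · exact Or.inl h
        · right
          rw [h, Fin.succ_last, hlast]
      obtain ⟨N₁, hN₁⟩ := IH P _ hc' (fun k => f k ⊓ P)
        (fun k => gs_inf (hgr k) (hg _)) (fun k => inf_le_inf_right _ (hdesc k))
        (fun k => inf_le_right)
      by_cases hA : ∀ k, f k ⊔ P = T
      · refine ⟨N₁, fun k hk => ?_⟩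
        refine eq_of_le_of_inf_le_of_sup_le (hf_le N₁ k hk) (le_of_eq (hN₁ k hk).symm) ?_
        rw [hA k, hA N₁]
      · push_neg at hA
        obtain ⟨k₀, hk₀⟩ := hA
        have hfk₀ : f k₀ ≤ P := by
          rcases hsupcase k₀ with h | h
          · exact sup_eq_right.mp h
          · exact absurd h hk₀
        obtain ⟨N₂, hN₂⟩ := IH P _ hc' (fun k => f (k₀ + k)) (fun k => hgr _)
          (fun k => hdesc _) (fun k => (hf_le k₀ (k₀ + k) (Nat.le_add_right _ _)).trans hfk₀)
        refine ⟨k₀ + N₂, fun k hk => ?_⟩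
        have h1 : f k = f (k₀ + (k - k₀)) := by congr 1; omega
        rw [h1, hN₂ (k - k₀) (by omega)]

/-- DCC on graded submodules gives covers above any proper graded submodule. -/
theorem cover_of_dcc
    (hdcc : ∀ f : ℕ → Submodule A M, (∀ k, IsGradedSubmodule ℳ (f k)) →
      (∀ k, f (k + 1) ≤ f k) → ∃ N, ∀ k, N ≤ k → f k = f N) :
    ∀ N : Submodule A M, IsGradedSubmodule ℳ N → N ≠ ⊤ →
      ∃ N', IsGradedSubmodule ℳ N' ∧ N < N' ∧
        ∀ K : Submodule A M, IsGradedSubmodule ℳ K → N ≤ K → K ≤ N' → K = N ∨ K = N' := by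
  have hwf : WellFounded
      ((· > ·) : {P : Submodule A M // IsGradedSubmodule ℳ P}ᵒᵈ →
        {P : Submodule A M // IsGradedSubmodule ℳ P}ᵒᵈ → Prop) := by
    refine @IsWellFounded.wf _ _ (wellFoundedGT_iff_monotone_chain_condition.mpr ?_)
    intro a
    obtain ⟨N, hN⟩ := hdcc (fun k => ((OrderDual.ofDual (a k)) : {P : Submodule A M // IsGradedSubmodule ℳ P}).1)
      (fun k => (OrderDual.ofDual (a k)).2)
      (fun k => a.monotone (Nat.le_succ k))
    exact ⟨N, fun m hm => OrderDual.toDual_inj.mp (Subtype.ext (hN m hm).symm)⟩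
  intro N hN hNT
  have hne : {K : {P : Submodule A M // IsGradedSubmodule ℳ P}ᵒᵈ |
      N < (OrderDual.ofDual K).1}.Nonempty := ⟨OrderDual.toDual ⟨⊤, gs_top⟩, hNT.lt_top⟩
  obtain ⟨K₀, hK₀mem, hK₀min⟩ := hwf.has_min _ hne
  refine ⟨(OrderDual.ofDual K₀).1, (OrderDual.ofDual K₀).2, hK₀mem, ?_⟩
  intro K hK h1 h2
  by_cases hKN : K = N
  · exact Or.inl hKN
  · right
    have hKmem : N < K := lt_of_le_of_ne h1 (Ne.symm hKN)
    by_contra hKne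
    have hlt2 : (⟨K, hK⟩ : {P : Submodule A M // IsGradedSubmodule ℳ P}) < OrderDual.ofDual K₀ :=
      Subtype.coe_lt_coe.mp (lt_of_le_of_ne h2 hKne)
    exact hK₀min (OrderDual.toDual ⟨K, hK⟩) hKmem hlt2

/-- (c) implies covers exist: key step uses a maximal "annihilator-in" ideal, which is a graded
prime, hence *maximal by hypothesis. -/
theorem cover_of_starMaximal [IsNoetherianRing A]
    (hmax : ∀ 𝔭 : Ideal A, 𝔭.IsPrime → Ideal.IsHomogeneous 𝒜 𝔭 →
      Module.annihilator A M ≤ 𝔭 → IsStarMaximal 𝒜 𝔭) :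
    ∀ N : Submodule A M, IsGradedSubmodule ℳ N → N ≠ ⊤ →
      ∃ N', IsGradedSubmodule ℳ N' ∧ N < N' ∧
        ∀ K : Submodule A M, IsGradedSubmodule ℳ K → N ≤ K → K ≤ N' → K = N ∨ K = N' := by
  intro N hN hNT
  set S : Set (Ideal A) := {I | ∃ (m : M) (j : ℤ), m ∈ ℳ j ∧ m ∉ N ∧ I = annIn N m} with hS
  have hSne : S.Nonempty := by
    obtain ⟨x, hx⟩ : ∃ x, x ∉ N := by
      by_contra h; push_neg at h; exact hNT (Submodule.eq_top_iff'.mpr h)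
    obtain ⟨i, hi⟩ := gs_exists_component hN hx
    exact ⟨annIn N _, _, i, SetLike.coe_mem _, hi, rfl⟩
  obtain ⟨I₀, hI₀mem, hI₀max⟩ := (set_has_maximal_iff_noetherian.mpr inferInstance) S hSne
  obtain ⟨m₀, j, hm₀j, hm₀N, hI₀eq⟩ := hI₀mem
  subst hI₀eq
  have hhom : Ideal.IsHomogeneous 𝒜 (annIn N m₀) := annIn_homogeneous 𝒜 hN hm₀j
  have hproper : annIn N m₀ ≠ ⊤ := by
    intro h
    have h1 : (1 : A) ∈ annIn N m₀ := h ▸ Submodule.mem_top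
    exact hm₀N (by simpa using mem_annIn.mp h1)
  have hprime : (annIn N m₀).IsPrime := by
    refine hhom.isPrime_of_homogeneous_mem_or_mem hproper ?_
    rintro x y ⟨e, hx⟩ ⟨e', hy⟩ hxy
    by_cases hyI : y ∈ annIn N m₀
    · exact Or.inr hyI
    · left
      have hym : y • m₀ ∉ N := hyI
      have hymj : y • m₀ ∈ ℳ (e' + j) := SetLike.GradedSMul.smul_mem hy hm₀j
      have hmemS : annIn N (y • m₀) ∈ S := ⟨y • m₀, _, hymj, hym, rfl⟩
      have hle : annIn N m₀ ≤ annIn N (y • m₀) := by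
        intro a ha
        rw [mem_annIn] at ha ⊢
        rw [smul_comm]
        exact Submodule.smul_mem _ _ ha
      have heq : annIn N (y • m₀) = annIn N m₀ := by
        by_contra hne
        exact hI₀max _ hmemS (lt_of_le_of_ne hle (Ne.symm hne))
      rw [← heq, mem_annIn]
      rw [mem_annIn] at hxy
      rwa [mul_smul] at hxy
  have hannle : Module.annihilator A M ≤ annIn N m₀ := by
    intro a ha
    rw [mem_annIn, Module.mem_annihilator.mp ha m₀]
    exact N.zero_mem
  obtain ⟨_, _, hI₀starmax⟩ := hmax _ hprime hhom hannle
  refine ⟨N ⊔ Submodule.span A {m₀}, gs_sup_span 𝒜 hN hm₀j, ?_, ?_⟩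
  · refine lt_of_le_of_ne le_sup_left ?_
    intro h
    have : m₀ ∈ N ⊔ Submodule.span A {m₀} :=
      Submodule.mem_sup_right (Submodule.mem_span_singleton_self m₀)
    rw [← h] at this
    exact hm₀N this
  · intro K hK h1 h2
    by_cases hKN : K = N
    · exact Or.inl hKN
    · right
      have hnle : ¬ K ≤ N := fun h => hKN (le_antisymm h h1)
      obtain ⟨x, d, hxd, hxK, hxN⟩ := gs_exists_homog_mem_not_mem hN hK hnle
      have hJhom : Ideal.IsHomogeneous 𝒜 (annIn K m₀) := annIn_homogeneous 𝒜 hK hm₀j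
      have hJle : annIn N m₀ ≤ annIn K m₀ := fun a ha => h1 ha
      obtain ⟨p, hp, y, hy, hsum⟩ := Submodule.mem_sup.mp (h2 hxK)
      obtain ⟨r, rfl⟩ := Submodule.mem_span_singleton.mp hy
      have hcomp : (decompose ℳ p d : M) + (decompose 𝒜 r (d - j) : A) • m₀ = x := by
        have hd2 : (decompose ℳ (p + r • m₀) d : M) = x := by
          rw [hsum, decompose_of_mem_same ℳ hxd]
        rw [decompose_add, DirectSum.add_apply, AddSubgroup.coe_add,
          aux_decompose_smul' 𝒜 ℳ hm₀j r d] at hd2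
        exact hd2
      set b : A := (decompose 𝒜 r (d - j) : A) with hb
      have hbK : b • m₀ ∈ K := by
        have h3 : (b • m₀ : M) = x - (decompose ℳ p d : M) := by rw [← hcomp]; abel
        rw [h3]
        exact Submodule.sub_mem _ hxK (h1 (hN d p hp))
      have hbN : b • m₀ ∉ N := by
        intro hmem
        apply hxN
        rw [← hcomp]
        exact Submodule.add_mem _ (hN d p hp) hmem
      have hJne : annIn K m₀ ≠ annIn N m₀ := by
        intro h
        have h7 : b ∈ annIn K m₀ := hbK
        rw [h] at h7
        exact hbN h7
      have hJtop : annIn K m₀ = ⊤ := by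
        rcases hI₀starmax _ hJhom hJle with h | h
        · exact absurd h hJne
        · exact h
      have hm₀K : m₀ ∈ K := by
        have h1' : (1 : A) ∈ annIn K m₀ := hJtop ▸ Submodule.mem_top
        simpa using mem_annIn.mp h1'
      exact le_antisymm h2 (sup_le h1 ((Submodule.span_singleton_le_iff_mem _ _).mpr hm₀K))

/-- (b) implies (c). -/
theorem series_to_c {n : ℕ} {c : Fin (n + 1) → Submodule A M}
    (hc : IsRelSeries ℳ ⊥ ⊤ c) :
    ({𝔭 : Ideal A | 𝔭.IsPrime ∧ Ideal.IsHomogeneous 𝒜 𝔭 ∧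
        Module.annihilator A M ≤ 𝔭}.Finite ∧
      ∀ 𝔭 : Ideal A, 𝔭.IsPrime → Ideal.IsHomogeneous 𝒜 𝔭 →
        Module.annihilator A M ≤ 𝔭 → IsStarMaximal 𝒜 𝔭) := by
  obtain ⟨hsm, h0, hlast, hg, hcv⟩ := hc
  set I : Fin n → Ideal A := fun i => (c i.castSucc).colon (c i.succ) with hI
  have hIsm : ∀ i, IsStarMaximal 𝒜 (I i) := fun i =>
    colon_isStarMaximal 𝒜 (hg _) (hg _) (hsm (Fin.castSucc_lt_succ (i := i))) (hcv i)
  have key : ∀ 𝔭 : Ideal A, 𝔭.IsPrime → Ideal.IsHomogeneous 𝒜 𝔭 →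
      Module.annihilator A M ≤ 𝔭 → ∃ i, 𝔭 = I i := by
    intro 𝔭 hp hph hpann
    by_contra hne
    push_neg at hne
    have hnotle : ∀ i, ¬ I i ≤ 𝔭 := by
      intro i hle
      rcases (hIsm i).2.2 𝔭 hph hle with h | h
      · exact hne i h
      · exact hp.ne_top h
    choose a haI ha𝔭 using fun i => (SetLike.not_le_iff_exists).mp (hnotle i)
    set a' : ℕ → A := fun k => if h : k < n then a ⟨k, h⟩ else 1 with ha'
    have main : ∀ d k, ∀ hkd : k + d = n, ∀ m : M,
        (∏ i ∈ Finset.Ico k n, a' i) • m ∈ c ⟨k, by omega⟩ := by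
      intro d
      induction d with
      | zero =>
          intro k hk m
          have hkn : k = n := by omega
          subst hkn
          rw [Finset.Ico_self, Finset.prod_empty, one_smul]
          have h4 : (⟨k, by omega⟩ : Fin (k + 1)) = Fin.last k := rfl
          rw [h4, hlast]
          trivial
      | succ d IH =>
          intro k hk m
          have hkn : k < n := by omega
          rw [Finset.prod_eq_prod_Ico_succ_bot hkn, mul_smul]
          have hmem : (∏ i ∈ Finset.Ico (k + 1) n, a' i) • m ∈ c (⟨k, hkn⟩ : Fin n).succ :=
            IH (k + 1) (by omega) m
          have ha'k : a' k = a ⟨k, hkn⟩ := by simp [ha', hkn]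
          rw [ha'k]
          exact Submodule.mem_colon.mp (haI ⟨k, hkn⟩) _ hmem
    have hann : (∏ i ∈ Finset.Ico 0 n, a' i) ∈ Module.annihilator A M := by
      rw [Module.mem_annihilator]
      intro m
      have h5 := main n 0 (by omega) m
      have h6 : (⟨0, by omega⟩ : Fin (n + 1)) = 0 := rfl
      rw [h6, h0] at h5
      simpa using h5
    obtain ⟨i, hiIco, hi𝔭⟩ := (Ideal.IsPrime.prod_mem_iff (hp := hp)).mp (hpann hann)
    have hilt : i < n := (Finset.mem_Ico.mp hiIco).2
    have : a' i = a ⟨i, hilt⟩ := by simp [ha', hilt]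
    rw [this] at hi𝔭
    exact ha𝔭 _ hi𝔭
  refine ⟨?_, fun 𝔭 hp hph hpann => ?_⟩
  · apply Set.Finite.subset (Set.finite_range I)
    rintro 𝔭 ⟨hp, hph, hpann⟩
    obtain ⟨i, hi⟩ := key 𝔭 hp hph hpann
    exact ⟨i, hi.symm⟩
  · obtain ⟨i, hi⟩ := key 𝔭 hp hph hpann
    rw [hi]
    exact hIsm i

end Aux

theorem star_iff_rel {ℳ : ℤ → AddSubgroup M} [DirectSum.Decomposition ℳ]
    {n : ℕ} {c : Fin (n + 1) → Submodule A M} :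
    IsStarCompositionSeries ℳ c ↔ IsRelSeries ℳ ⊥ ⊤ c := Iff.rfl

/-- For `A` a Noetherian ℤ-graded ring and `M` a finitely generated graded `A`-module, the
following are equivalent: (a) `M` has the DCC on graded submodules; (b) `M` has a *composition
series; (c) the graded primes containing `Ann_A(M)` form a finite set of *maximal ideals. -/
theorem stmt_4 (𝒜 : ℤ → AddSubgroup A) [GradedRing 𝒜] [IsNoetherianRing A]
    (ℳ : ℤ → AddSubgroup M) [DirectSum.Decomposition ℳ] [SetLike.GradedSMul 𝒜 ℳ]
    [Module.Finite A M] :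
    ((∀ f : ℕ → Submodule A M, (∀ k, IsGradedSubmodule ℳ (f k)) →
        (∀ k, f (k + 1) ≤ f k) → ∃ N, ∀ k, N ≤ k → f k = f N) ↔
      (∃ (n : ℕ) (c : Fin (n + 1) → Submodule A M), IsStarCompositionSeries ℳ c)) ∧
    ((∃ (n : ℕ) (c : Fin (n + 1) → Submodule A M), IsStarCompositionSeries ℳ c) ↔
      ({𝔭 : Ideal A | 𝔭.IsPrime ∧ Ideal.IsHomogeneous 𝒜 𝔭 ∧
          Module.annihilator A M ≤ 𝔭}.Finite ∧
        ∀ 𝔭 : Ideal A, 𝔭.IsPrime → Ideal.IsHomogeneous 𝒜 𝔭 →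
          Module.annihilator A M ≤ 𝔭 → IsStarMaximal 𝒜 𝔭)) := by
  constructor
  · constructor
    · intro hdcc
      obtain ⟨n, c, hc⟩ := exists_relSeries_to_top (ℳ := ℳ) (cover_of_dcc hdcc) ⊥ gs_bot
      exact ⟨n, c, star_iff_rel.mpr hc⟩
    · rintro ⟨n, c, hc⟩ f hgr hdesc
      exact dcc_of_relSeries n ⊤ c (star_iff_rel.mp hc) f hgr hdesc (fun k => le_top)
  · constructor
    · rintro ⟨n, c, hc⟩
      exact series_to_c 𝒜 (star_iff_rel.mp hc)
    · rintro ⟨hfin, hmax⟩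
      obtain ⟨n, c, hc⟩ := exists_relSeries_to_top (ℳ := ℳ) (cover_of_starMaximal 𝒜 hmax) ⊥ gs_bot
      exact ⟨n, c, star_iff_rel.mpr hc⟩
end
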